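/- Let X be an extremally disconnected Hausdorff topological space and φ : X → X a homeomorphism. Then the fixed point set Fix(φ) = {x ∈ X : φ(x) = x} is open in X. -/

import Mathlib

open scoped Classical ENNReal
open Topology Filter

noncomputable section

namespace QR

/-- The fixed-point set of a homeomorphism of an extremally disconnected
Hausdorff space is open. -/
theorem isOpen_fixedPoints_of_extremallyDisconnected (X : Type*) [TopologicalSpace X]
    [T2Space X] [ExtremallyDisconnected X] (φ : X ≃ₜ X) :
    IsOpen {x : X | φ x = x} := by
  classical
  -- the moving set
  set S : Set (Set X) := {U : Set X | IsOpen U ∧ Disjoint U (φ '' U)} with hS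
  obtain ⟨U, hUS, hmax⟩ := zorn_subset S (fun c hcS hchain => by
    refine ⟨⋃₀ c, ⟨isOpen_sUnion fun s hs => (hcS hs).1, ?_⟩,
      fun s hs => Set.subset_sUnion_of_mem hs⟩
    rw [Set.image_sUnion, Set.disjoint_sUnion_left]
    intro a ha
    rw [Set.disjoint_sUnion_right]
    rintro _ ⟨b, hb, rfl⟩
    rcases hchain.total ha hb with h | h
    · exact ((hcS hb).2).mono_left h
    · exact ((hcS ha).2).mono_right (Set.image_mono h))
  obtain ⟨hUopen, hUdisj⟩ := hUS
  -- C = closure U is clopen and disjoint from its image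
  set C := closure U with hC
  have hCopen : IsOpen C := ExtremallyDisconnected.open_closure U hUopen
  have hCclosed : IsClosed C := isClosed_closure
  have himgC : φ '' C = closure (φ '' U) := φ.image_closure U
  have hCdisj : Disjoint C (φ '' C) := by
    rw [himgC]
    exact ((hUdisj.closure_left (φ.isOpen_image.mpr hUopen)).closure_right hCopen)
  have hUsubC : U ⊆ C := subset_closure
  -- the three closed sets cover the moving set
  have key : {x : X | φ x ≠ x} = C ∪ φ '' C ∪ φ.symm '' C := by
    apply Set.Subset.antisymm
    · intro x hx
      by_contra hxK
      simp only [Set.mem_union, not_or] at hxK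
      obtain ⟨⟨hxC, hxφC⟩, hxφiC⟩ := hxK
      -- find V open, x ∈ V, disjoint from everything
      obtain ⟨A, B, hA, hB, hφxA, hxB, hAB⟩ := t2_separation hx
      set V : Set X := B ∩ φ ⁻¹' A ∩ (C ∪ φ '' C ∪ φ.symm '' C)ᶜ with hV
      have hKclosed : IsClosed (C ∪ φ '' C ∪ φ.symm '' C) :=
        ((hCclosed.union (φ.isClosedMap _ hCclosed)).union (φ.symm.isClosedMap _ hCclosed))
      have hVopen : IsOpen V :=
        ((hB.inter (hA.preimage φ.continuous)).inter hKclosed.isOpen_compl)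
      have hxV : x ∈ V := ⟨⟨hxB, hφxA⟩, by simp [hxC, hxφC, hxφiC]⟩
      have hVdisj : Disjoint V (φ '' V) := by
        refine Set.disjoint_left.mpr fun y hyV hyφV => ?_
        obtain ⟨z, hzV, rfl⟩ := hyφV
        exact Set.disjoint_left.mp hAB hzV.1.2 hyV.1.1
      -- U ∪ V contradicts maximality
      have hUV : U ∪ V ∈ S := by
        refine ⟨hUopen.union hVopen, ?_⟩
        rw [Set.image_union, Set.disjoint_union_left]
        constructor <;> rw [Set.disjoint_union_right]
        · refine ⟨hUdisj, ?_⟩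
          -- U disjoint from φ '' V : φ '' V disjoint from C since V ∩ φ.symm '' C = ∅
          refine Set.disjoint_left.mpr fun y hyU hyφV => ?_
          obtain ⟨z, hzV, rfl⟩ := hyφV
          have : z ∈ φ.symm '' C := ⟨φ z, hUsubC hyU, φ.symm_apply_apply z⟩
          exact hzV.2 (by simp [this])
        · constructor
          · -- V disjoint from φ '' U ⊆ φ '' C
            refine Set.disjoint_left.mpr fun y hyV hyφU => ?_
            have : y ∈ φ '' C := Set.image_mono hUsubC hyφU
            exact hyV.2 (by simp [this])
          · exact hVdisj
      have hxU : x ∈ U := hmax hUV Set.subset_union_left (Or.inr hxV)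
      exact hxC (hUsubC hxU)
    · intro x hx hfix
      rcases hx with (hx | hx) | hx
      · exact Set.disjoint_left.mp hCdisj hx ⟨x, hx, hfix⟩
      · obtain ⟨z, hz, hzx⟩ := hx
        have : z = x := φ.injective (by rw [hzx, hfix])
        subst this
        exact Set.disjoint_left.mp hCdisj hz ⟨z, hz, hfix⟩
      · obtain ⟨z, hz, hzx⟩ := hx
        have hxz : φ x = z := by rw [← hzx, φ.apply_symm_apply]
        have : z = x := by rw [← hxz, hfix]
        subst this
        exact Set.disjoint_left.mp hCdisj hz ⟨z, hz, hfix⟩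
  have : IsClosed {x : X | φ x ≠ x} := by
    rw [key]
    exact ((isClosed_closure.union (φ.isClosedMap _ isClosed_closure)).union
      (φ.symm.isClosedMap _ isClosed_closure))
  have := this.isOpen_compl
  convert this using 1
  ext x
  simp

end QR
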